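/- The function p_2(r) = e^{10r} + 2 e^{-5r} cos(5√3 r) − 3 satisfies p_2(0)=p_2'(0)=p_2''(0)=0 and p_2'''(r) > 0 for all r ∈ [0,1]; consequently p_2(r) > 0 for all r ∈ (0,1]. -/

import Mathlib

open Real Set

noncomputable def P (r : ℝ) : ℝ := exp (10*r) + 2 * exp (-5*r) * cos (5*Real.sqrt 3*r) - 3
noncomputable def P1 (r : ℝ) : ℝ := 10*exp (10*r) - 10*exp (-5*r)*cos (5*Real.sqrt 3*r) - 10*Real.sqrt 3*exp (-5*r)*sin (5*Real.sqrt 3*r)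
noncomputable def P2 (r : ℝ) : ℝ := 100*exp (10*r) - 100*exp (-5*r)*cos (5*Real.sqrt 3*r) + 100*Real.sqrt 3*exp (-5*r)*sin (5*Real.sqrt 3*r)
noncomputable def P3 (r : ℝ) : ℝ := 1000*exp (10*r) + 2000*exp (-5*r)*cos (5*Real.sqrt 3*r)

lemma hs3 : Real.sqrt 3 * Real.sqrt 3 = 3 := Real.mul_self_sqrt (by norm_num)

section derivs
variable (r : ℝ)

lemma he10 : HasDerivAt (fun r : ℝ => exp (10*r)) (10 * exp (10*r)) r := by
  simpa [mul_comm] using (HasDerivAt.exp ((hasDerivAt_id r).const_mul 10))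

lemma he5 : HasDerivAt (fun r : ℝ => exp (-5*r)) (-5 * exp (-5*r)) r := by
  simpa [mul_comm] using (HasDerivAt.exp ((hasDerivAt_id r).const_mul (-5)))

lemma hcos : HasDerivAt (fun r : ℝ => cos (5*Real.sqrt 3*r)) (-(5*Real.sqrt 3) * sin (5*Real.sqrt 3*r)) r := by
  simpa [mul_comm] using (HasDerivAt.cos ((hasDerivAt_id r).const_mul (5*Real.sqrt 3)))

lemma hsin : HasDerivAt (fun r : ℝ => sin (5*Real.sqrt 3*r)) ((5*Real.sqrt 3) * cos (5*Real.sqrt 3*r)) r := by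
  simpa [mul_comm] using (HasDerivAt.sin ((hasDerivAt_id r).const_mul (5*Real.sqrt 3)))

lemma hdP : HasDerivAt P (P1 r) r := by
  have h := ((he10 r).add (((he5 r).mul (hcos r)).const_mul 2)).sub_const 3
  convert h using 1
  · rfl
  · rfl
  · funext x; simp only [P, Pi.add_apply, Pi.sub_apply, Pi.mul_apply]; ring
  · simp only [P1]; ring


lemma hdP1 : HasDerivAt P1 (P2 r) r := by
  have h := ((((he10 r).const_mul 10).sub (((he5 r).mul (hcos r)).const_mul 10)).sub
      ((((he5 r).mul (hsin r)).const_mul (10*Real.sqrt 3))))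
  convert h using 1
  · rfl
  · rfl
  · funext x; simp only [P1, Pi.add_apply, Pi.sub_apply, Pi.mul_apply]; ring
  · simp only [P2]
    linear_combination (50 * exp (-5*r) * cos (5*Real.sqrt 3*r)) * hs3

lemma hdP2 : HasDerivAt P2 (P3 r) r := by
  have h := ((((he10 r).const_mul 100).sub (((he5 r).mul (hcos r)).const_mul 100)).add
      ((((he5 r).mul (hsin r)).const_mul (100*Real.sqrt 3))))
  convert h using 1
  · rfl
  · rfl
  · funext x; simp only [P2, Pi.add_apply, Pi.sub_apply, Pi.mul_apply]; ring
  · simp only [P3]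
    linear_combination (-500 * exp (-5*r) * cos (5*Real.sqrt 3*r)) * hs3

end derivs

lemma P3pos : ∀ r ∈ Icc (0:ℝ) 1, 0 < P3 r := by
  rintro r ⟨hr0, hr1⟩
  simp only [P3]
  rcases le_or_gt 0 (cos (5*Real.sqrt 3*r)) with h | h
  · nlinarith [exp_pos (10*r), mul_nonneg (exp_pos (-5*r)).le h]
  · have hs : (0:ℝ) ≤ Real.sqrt 3 := Real.sqrt_nonneg 3
    have hslt : Real.sqrt 3 < 2 := by nlinarith [hs3]
    have hπ : (3:ℝ) < π := Real.pi_gt_three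
    have hcr : π/2 < 5*Real.sqrt 3*r := by
      by_contra hc
      push_neg at hc
      have h1 : -(π/2) ≤ 5*Real.sqrt 3*r := by
        have h2 : (0:ℝ) ≤ 5*Real.sqrt 3*r := by positivity
        linarith [Real.pi_pos]
      exact absurd (Real.cos_nonneg_of_mem_Icc ⟨h1, hc⟩) (not_le.mpr h)
    have hr : 3/20 < r := by
      nlinarith [mul_nonneg hr0 (show (0:ℝ) ≤ 2 - Real.sqrt 3 by linarith)]
    have h15 : (1:ℝ) < 15*r := by nlinarith
    have hx : (2:ℝ) < exp (15*r) := by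
      calc (2:ℝ) < exp 1 := by nlinarith [Real.exp_one_gt_d9]
        _ < exp (15*r) := Real.exp_lt_exp.mpr h15
    have hsplit : exp (10*r) = exp (15*r) * exp (-5*r) := by
      rw [← Real.exp_add]; ring_nf
    have hc1 : -1 ≤ cos (5*Real.sqrt 3*r) := Real.neg_one_le_cos _
    rw [hsplit]
    nlinarith [exp_pos (-5*r), mul_le_mul_of_nonneg_left hc1 (exp_pos (-5*r)).le,
      mul_pos (exp_pos (-5*r)) (show (0:ℝ) < 1000*exp (15*r) - 2000 by nlinarith)]

lemma cascade (f f' : ℝ → ℝ) (hd : ∀ r, HasDerivAt f (f' r) r) (h0 : f 0 = 0)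
    (hpos : ∀ r ∈ Ioo (0:ℝ) 1, 0 < f' r) : ∀ r ∈ Ioc (0:ℝ) 1, 0 < f r := by
  intro r hr
  have hmono : StrictMonoOn f (Icc 0 1) := by
    apply strictMonoOn_of_deriv_pos (convex_Icc 0 1)
    · exact Continuous.continuousOn
        (continuous_iff_continuousAt.mpr fun x => (hd x).differentiableAt.continuousAt)
    · intro x hx
      rw [interior_Icc] at hx
      rw [(hd x).deriv]
      exact hpos x hx
  have := hmono ⟨le_refl 0, zero_le_one⟩ ⟨hr.1.le, hr.2⟩ hr.1
  linarith [h0 ▸ this]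

lemma e1 : deriv P = P1 := funext fun r => (hdP r).deriv
lemma e2 : deriv P1 = P2 := funext fun r => (hdP1 r).deriv
lemma e3 : deriv P2 = P3 := funext fun r => (hdP2 r).deriv
lemma i2 : iteratedDeriv 2 P = P2 := by
  rw [iteratedDeriv_succ, iteratedDeriv_one, e1, e2]
lemma i3 : iteratedDeriv 3 P = P3 := by
  rw [iteratedDeriv_succ, i2, e3]

lemma P2pos : ∀ r ∈ Ioc (0:ℝ) 1, 0 < P2 r :=
  cascade P2 P3 hdP2 (by norm_num [P2]) (fun r hr => P3pos r ⟨hr.1.le, hr.2.le⟩)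
lemma P1pos : ∀ r ∈ Ioc (0:ℝ) 1, 0 < P1 r :=
  cascade P1 P2 hdP1 (by norm_num [P1]) (fun r hr => P2pos r ⟨hr.1, hr.2.le⟩)
lemma Ppos : ∀ r ∈ Ioc (0:ℝ) 1, 0 < P r :=
  cascade P P1 hdP (by norm_num [P]) (fun r hr => P1pos r ⟨hr.1, hr.2.le⟩)

theorem stmt_5 :
    let p : ℝ → ℝ := fun r => exp (10 * r) + 2 * exp (-5 * r) * cos (5 * Real.sqrt 3 * r) - 3
    p 0 = 0 ∧ deriv p 0 = 0 ∧ iteratedDeriv 2 p 0 = 0 ∧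
    (∀ r ∈ Icc (0 : ℝ) 1, 0 < iteratedDeriv 3 p r) ∧
    (∀ r ∈ Ioc (0 : ℝ) 1, 0 < p r) := by
  intro p
  have hpP : p = P := rfl
  rw [hpP]
  refine ⟨by norm_num [P], ?_, ?_, ?_, Ppos⟩
  · rw [e1]; norm_num [P1]
  · rw [i2]; norm_num [P2]
  · intro r hr; rw [i3]; exact P3pos r hr
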